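/- Let X, Y ∈ sp(2) (2×2 quaternionic matrices with X + X* = 0) with X₂₂ = Y₂₂ = 0 (viewing them as tangent vectors to Sp(2)/Sp(1) = S⁷). If [X,Y] = 0, then X and Y are linearly dependent over ℝ. -/

import Mathlib

open Quaternion Matrix

private lemma sq_sum_three_eq_zero (x y z : ℝ) (h : x ^ 2 + y ^ 2 + z ^ 2 = 0) :
    x = 0 ∧ y = 0 ∧ z = 0 := by
  refine ⟨?_, ?_, ?_⟩ <;> nlinarith [sq_nonneg x, sq_nonneg y, sq_nonneg z]

theorem sp2_commuting_tangent_vectors_dependent (X Y : Matrix (Fin 2) (Fin 2) ℍ[ℝ])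
    (hX : X + Xᴴ = 0) (hY : Y + Yᴴ = 0)
    (hX2 : X 1 1 = 0) (hY2 : Y 1 1 = 0)
    (hcomm : X * Y = Y * X) :
    ¬ LinearIndependent ℝ ![X, Y] := by
  set a := X 0 0 with ha'
  set b := X 0 1 with hb'
  set c := Y 0 0 with hc'
  set d := Y 0 1 with hd'
  have hX10 : X 1 0 = -star b := by
    have := congrFun (congrFun hX 1) 0
    simp [Matrix.add_apply, Matrix.conjTranspose_apply] at this
    exact eq_neg_of_add_eq_zero_left this
  have hY10 : Y 1 0 = -star d := by
    have := congrFun (congrFun hY 1) 0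
    simp [Matrix.add_apply, Matrix.conjTranspose_apply] at this
    exact eq_neg_of_add_eq_zero_left this
  have hare : a + star a = 0 := by
    have := congrFun (congrFun hX 0) 0
    simpa [Matrix.add_apply, Matrix.conjTranspose_apply] using this
  have hcre : c + star c = 0 := by
    have := congrFun (congrFun hY 0) 0
    simpa [Matrix.add_apply, Matrix.conjTranspose_apply] using this
  have E1 : a * c + b * (-star d) = c * a + d * (-star b) := by
    have := congrFun (congrFun hcomm 0) 0
    simpa [Matrix.mul_apply, Fin.sum_univ_two, hX10, hY10] using this
  have E2 : a * d = c * b := by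
    have := congrFun (congrFun hcomm 0) 1
    simpa [Matrix.mul_apply, Fin.sum_univ_two, hX2, hY2] using this
  have E4 : (-star b) * d = (-star d) * b := by
    have := congrFun (congrFun hcomm 1) 1
    simpa [Matrix.mul_apply, Fin.sum_univ_two, hX10, hY10, hX2, hY2] using this
  rw [LinearIndependent.pair_iff]
  push_neg
  by_cases hb : b = 0
  · by_cases haz : a = 0
    · refine ⟨1, 0, ?_, fun h => absurd h one_ne_zero⟩
      have hXz : X = 0 := by
        refine Matrix.ext fun i j => ?_
        fin_cases i <;> fin_cases j
        · exact haz
        · exact hb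
        · show X 1 0 = 0; rw [hX10, hb, star_zero, neg_zero]
        · exact hX2
      simp [hXz]
    · have hd0 : d = 0 := by
        have h0 : a * d = 0 := by rw [E2, hb, mul_zero]
        exact (mul_eq_zero.mp h0).resolve_left haz
      have hac : a * c = c * a := by
        have h := E1
        rw [hb, hd0] at h
        simpa using h
      have har : a.re = 0 := by
        have h := congrArg QuaternionAlgebra.re hare
        simp at h
        linarith
      have hcr : c.re = 0 := by
        have h := congrArg QuaternionAlgebra.re hcre
        simp at h
        linarith
      have hI := congrArg QuaternionAlgebra.imI hac
      have hJ := congrArg QuaternionAlgebra.imJ hac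
      have hK := congrArg QuaternionAlgebra.imK hac
      simp only [Quaternion.imI_mul, Quaternion.imJ_mul, Quaternion.imK_mul, har, hcr,
        zero_mul, mul_zero, zero_add, add_zero] at hI hJ hK
      set p := a.imI * c.imI + a.imJ * c.imJ + a.imK * c.imK with hp
      set q := a.imI ^ 2 + a.imJ ^ 2 + a.imK ^ 2 with hq
      have hmain : q • c = p • a := by
        apply Quaternion.ext <;>
          simp only [Quaternion.re_smul, Quaternion.imI_smul, Quaternion.imJ_smul,
            Quaternion.imK_smul, smul_eq_mul, har, hcr, mul_zero]
        · linear_combination (a.imK / 2) * hJ - (a.imJ / 2) * hK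
        · linear_combination (a.imI / 2) * hK - (a.imK / 2) * hI
        · linear_combination (a.imJ / 2) * hI - (a.imI / 2) * hJ
      refine ⟨p, -q, ?_, fun _ hqz => haz ?_⟩
      · refine Matrix.ext fun i j => ?_
        fin_cases i <;> fin_cases j
        · show p • a + (-q) • c = (0 : Matrix (Fin 2) (Fin 2) ℍ[ℝ]) 0 0
          rw [neg_smul, ← hmain]; simp
        · show p • b + (-q) • d = (0 : Matrix (Fin 2) (Fin 2) ℍ[ℝ]) 0 1
          rw [hb, hd0]; simp
        · show p • X 1 0 + (-q) • Y 1 0 = (0 : Matrix (Fin 2) (Fin 2) ℍ[ℝ]) 1 0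
          rw [hX10, hY10, hb, hd0]; simp
        · show p • X 1 1 + (-q) • Y 1 1 = (0 : Matrix (Fin 2) (Fin 2) ℍ[ℝ]) 1 1
          rw [hX2, hY2]; simp
      · have hqz' : q = 0 := by linarith [neg_eq_zero.mp hqz]
        rw [hq] at hqz'
        obtain ⟨h1, h2, h3⟩ := sq_sum_three_eq_zero _ _ _ hqz'
        apply Quaternion.ext <;> simp [har, h1, h2, h3]
  · have h4 : star (star b * d) = star b * d := by
      rw [StarMul.star_mul, star_star]
      have h := E4
      simpa [neg_mul, neg_inj] using h.symm
    have hr : star b * d = ((star b * d).re : ℍ[ℝ]) := Quaternion.star_eq_self.mp h4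
    set r := (star b * d).re with hrdef
    set n := normSq b with hndef
    have hd2 : (n : ℍ[ℝ]) * d = (r : ℍ[ℝ]) * b := by
      calc (n : ℍ[ℝ]) * d = (b * star b) * d := by rw [Quaternion.self_mul_star]
        _ = b * (star b * d) := by rw [mul_assoc]
        _ = b * (r : ℍ[ℝ]) := by rw [← hr]
        _ = (r : ℍ[ℝ]) * b := (Quaternion.coe_commutes r b).symm
    have hc2 : (n : ℍ[ℝ]) * c = (r : ℍ[ℝ]) * a := by
      have key : ((n : ℍ[ℝ]) * c) * b = ((r : ℍ[ℝ]) * a) * b := by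
        calc ((n : ℍ[ℝ]) * c) * b = (n : ℍ[ℝ]) * (c * b) := by rw [mul_assoc]
          _ = (n : ℍ[ℝ]) * (a * d) := by rw [← E2]
          _ = a * ((n : ℍ[ℝ]) * d) := by
              rw [← mul_assoc, Quaternion.coe_commutes, mul_assoc]
          _ = a * ((r : ℍ[ℝ]) * b) := by rw [hd2]
          _ = ((r : ℍ[ℝ]) * a) * b := by
              rw [← mul_assoc, Quaternion.coe_commutes]
      exact mul_right_cancel₀ hb key
    have hstar : (n : ℍ[ℝ]) * star d = (r : ℍ[ℝ]) * star b := by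
      have h := congrArg star hd2
      simp only [StarMul.star_mul, Quaternion.star_coe] at h
      rw [← Quaternion.coe_commutes, ← Quaternion.coe_commutes] at h
      exact h
    refine ⟨r, -n, ?_, fun _ hnz => (Quaternion.normSq_ne_zero.mpr hb) (by linarith [neg_eq_zero.mp hnz])⟩
    refine Matrix.ext fun i j => ?_
    fin_cases i <;> fin_cases j
    · show r • a + (-n) • c = (0 : Matrix (Fin 2) (Fin 2) ℍ[ℝ]) 0 0
      rw [neg_smul, ← Quaternion.coe_mul_eq_smul, ← Quaternion.coe_mul_eq_smul, hc2]
      simp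
    · show r • b + (-n) • d = (0 : Matrix (Fin 2) (Fin 2) ℍ[ℝ]) 0 1
      rw [neg_smul, ← Quaternion.coe_mul_eq_smul, ← Quaternion.coe_mul_eq_smul, hd2]
      simp
    · show r • X 1 0 + (-n) • Y 1 0 = (0 : Matrix (Fin 2) (Fin 2) ℍ[ℝ]) 1 0
      rw [hX10, hY10, smul_neg, smul_neg, neg_smul, neg_neg,
        ← Quaternion.coe_mul_eq_smul, ← Quaternion.coe_mul_eq_smul, hstar]
      simp
    · show r • X 1 1 + (-n) • Y 1 1 = (0 : Matrix (Fin 2) (Fin 2) ℍ[ℝ]) 1 1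
      rw [hX2, hY2]; simp
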